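/- arXiv:2604.21844 — 4 statements merged into one kernel-verified Lean document; each statement's English description precedes it below -/
import Mathlib

section
/- Monotonicity and continuity of the criticality parameter (Lemma 1, part (a), regularity): The function ξ : (0,∞) → (0, 1/b(0)), where for each γ > 0, ξ(γ) is the unique solution in (0, 1/b(0)) of ∫_0^γ (b(x)ξ/(1 − b(x)ξ))^2 dx = 1, is monotonically decreasing and continuous on (0,∞). -/
open MeasureTheory ProbabilityTheory Filter Set
open scoped RealInnerProductSpace ENNReal NNReal

noncomputable section

/-- The space `L²([0,1], ℝ)`. -/
abbrev H01 : Type := MeasureTheory.Lp ℝ 2 (MeasureTheory.volume.restrict (Set.Icc (0:ℝ) 1))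

instance : MeasurableSpace H01 := borel _
instance : BorelSpace H01 := ⟨rfl⟩

namespace XiAux

variable {b : ℝ → ℝ}

lemma g_aesm (hb_int : IntegrableOn b (Set.Ici 0)) (ξ γ : ℝ) :
    AEStronglyMeasurable (fun x => (b x * ξ / (1 - b x * ξ))^2) (volume.restrict (Ioc 0 γ)) := by
  have hb : AEMeasurable b (volume.restrict (Ioc (0:ℝ) γ)) :=
    hb_int.aemeasurable.mono_measure (Measure.restrict_mono (fun x hx => hx.1.le) le_rfl)
  exact (((hb.mul_const ξ).div
    (aemeasurable_const.sub (hb.mul_const ξ))).pow aemeasurable_const).aestronglyMeasurable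

lemma g_int (hb_nonneg : ∀ x, 0 ≤ x → 0 ≤ b x) (hb_anti : AntitoneOn b (Set.Ici 0))
    (hb_int : IntegrableOn b (Set.Ici 0))
    {ξ C : ℝ} (γ : ℝ) (hξ0 : 0 ≤ ξ) (hξC : ξ ≤ C) (hC : b 0 * C < 1) :
    IntegrableOn (fun x => (b x * ξ / (1 - b x * ξ))^2) (Ioc 0 γ) := by
  refine Integrable.mono' (g := fun _ => (b 0 * C / (1 - b 0 * C))^2)
    (integrableOn_const measure_Ioc_lt_top.ne) (g_aesm hb_int ξ γ) ?_
  filter_upwards [self_mem_ae_restrict measurableSet_Ioc] with x hx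
  have h1 : b x ≤ b 0 := hb_anti self_mem_Ici hx.1.le hx.1.le
  have h0 : 0 ≤ b x := hb_nonneg x hx.1.le
  have hu0 : 0 ≤ b x * ξ := mul_nonneg h0 hξ0
  have huv : b x * ξ ≤ b 0 * C := mul_le_mul h1 hξC hξ0 (hb_nonneg 0 le_rfl)
  rw [Real.norm_eq_abs, abs_of_nonneg (sq_nonneg _)]
  have h2 : 0 < 1 - b 0 * C := by linarith
  have h3 : 0 < 1 - b x * ξ := by linarith
  have h : b x * ξ/(1-b x * ξ) ≤ b 0 * C/(1-b 0 * C) := by rw [div_le_div_iff₀ h3 h2]; nlinarith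
  exact pow_le_pow_left₀ (div_nonneg hu0 h3.le) h 2

lemma F_strict (hb_nonneg : ∀ x, 0 ≤ x → 0 ≤ b x) (hb_anti : AntitoneOn b (Set.Ici 0))
    (hb0 : 0 < b 0)
    (hb_lip : ∃ L δ : ℝ, 0 < δ ∧ ∀ x ∈ Set.Icc (0:ℝ) δ, |b x - b 0| ≤ L * x)
    (hb_int : IntegrableOn b (Set.Ici 0))
    {γ ξa ξb : ℝ} (hγ : 0 < γ) (ha0 : 0 ≤ ξa) (hab : ξa < ξb) (hb1 : b 0 * ξb < 1) :
    ∫ x in Ioc 0 γ, (b x * ξa / (1 - b x * ξa))^2 <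
      ∫ x in Ioc 0 γ, (b x * ξb / (1 - b x * ξb))^2 := by
  obtain ⟨L, δ, hδ, hL⟩ := hb_lip
  set L' := max L 1 with hL'def
  have hL' : (0:ℝ) < L' := lt_of_lt_of_le one_pos (le_max_right _ _)
  set ε := min γ (min δ (b 0 / (2 * L'))) with hεdef
  have hε0 : 0 < ε := lt_min hγ (lt_min hδ (by positivity))
  have hεγ : ε ≤ γ := min_le_left _ _
  have hbx : ∀ x ∈ Ioc (0:ℝ) ε, b 0 / 2 ≤ b x := by
    intro x hx
    have hxδ : x ≤ δ := hx.2.trans ((min_le_right _ _).trans (min_le_left _ _))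
    have h1 := hL x ⟨hx.1.le, hxδ⟩
    have hxL : x ≤ b 0 / (2 * L') := hx.2.trans ((min_le_right _ _).trans (min_le_right _ _))
    have h2 : |b x - b 0| ≤ L' * x := h1.trans (by nlinarith [le_max_left L 1, hx.1.le])
    have h3 := abs_le.1 h2
    have : L' * x ≤ b 0 / 2 := by
      calc L' * x ≤ L' * (b 0 / (2 * L')) := by nlinarith
      _ = b 0 / 2 := by field_simp
    linarith [h3.1]
  have hinta : IntegrableOn (fun x => (b x * ξa / (1 - b x * ξa))^2) (Ioc 0 γ) :=
    g_int hb_nonneg hb_anti hb_int γ ha0 hab.le hb1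
  have hintb : IntegrableOn (fun x => (b x * ξb / (1 - b x * ξb))^2) (Ioc 0 γ) :=
    g_int hb_nonneg hb_anti hb_int γ (ha0.trans hab.le) le_rfl hb1
  set h : ℝ → ℝ := fun x => (b x * ξb / (1 - b x * ξb))^2 - (b x * ξa / (1 - b x * ξa))^2 with hdef
  have hpt : ∀ x ∈ Ioc (0:ℝ) γ, 0 ≤ h x := by
    intro x hx
    have hbnn : 0 ≤ b x := hb_nonneg x hx.1.le
    have hble : b x ≤ b 0 := hb_anti self_mem_Ici hx.1.le hx.1.le
    have hv1 : b x * ξb < 1 := lt_of_le_of_lt (mul_le_mul_of_nonneg_right hble (ha0.trans hab.le)) hb1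
    have huv : b x * ξa ≤ b x * ξb := mul_le_mul_of_nonneg_left hab.le hbnn
    have hu0 : 0 ≤ b x * ξa := mul_nonneg hbnn ha0
    have h2 : 0 < 1 - b x * ξb := by linarith
    have h3 : 0 < 1 - b x * ξa := by linarith
    have : b x * ξa/(1-b x*ξa) ≤ b x * ξb/(1-b x*ξb) := by rw [div_le_div_iff₀ h3 h2]; nlinarith
    have := pow_le_pow_left₀ (div_nonneg hu0 h3.le) this 2
    simp only [hdef]; linarith
  have hptε : ∀ x ∈ Ioc (0:ℝ) ε, 0 < h x := by
    intro x hx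
    have hxγ : x ∈ Ioc (0:ℝ) γ := ⟨hx.1, hx.2.trans hεγ⟩
    have hbnn : 0 < b x := lt_of_lt_of_le (by linarith) (hbx x hx)
    have hble : b x ≤ b 0 := hb_anti self_mem_Ici hx.1.le hx.1.le
    have hv1 : b x * ξb < 1 := lt_of_le_of_lt (mul_le_mul_of_nonneg_right hble (ha0.trans hab.le)) hb1
    have huv : b x * ξa < b x * ξb := by nlinarith
    have hu0 : 0 ≤ b x * ξa := mul_nonneg hbnn.le ha0
    have h2 : 0 < 1 - b x * ξb := by linarith
    have h3 : 0 < 1 - b x * ξa := by linarith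
    have hlt : b x * ξa/(1-b x*ξa) < b x * ξb/(1-b x*ξb) := by rw [div_lt_div_iff₀ h3 h2]; nlinarith
    have := pow_lt_pow_left₀ hlt (div_nonneg hu0 h3.le) (by norm_num : 2 ≠ 0)
    simp only [hdef]; linarith
  have hinth : IntegrableOn h (Ioc 0 γ) := hintb.sub hinta
  have hinthε : IntegrableOn h (Ioc 0 ε) := hinth.mono_set (Ioc_subset_Ioc_right hεγ)
  have hnn_ae : 0 ≤ᵐ[volume.restrict (Ioc (0:ℝ) γ)] h := by
    filter_upwards [self_mem_ae_restrict measurableSet_Ioc] with x hx using hpt x hx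
  have hnn_aeε : 0 ≤ᵐ[volume.restrict (Ioc (0:ℝ) ε)] h := by
    filter_upwards [self_mem_ae_restrict measurableSet_Ioc] with x hx using (hptε x hx).le
  have hpos : 0 < ∫ x in Ioc (0:ℝ) ε, h x := by
    rw [setIntegral_pos_iff_support_of_nonneg_ae hnn_aeε hinthε]
    have hsubset : Ioc (0:ℝ) ε ⊆ Function.support h ∩ Ioc 0 ε :=
      fun x hx => ⟨(hptε x hx).ne', hx⟩
    calc (0:ENNReal) < ENNReal.ofReal ε := by simpa using hε0
      _ = volume (Ioc (0:ℝ) ε) := by rw [Real.volume_Ioc]; norm_num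
      _ ≤ volume (Function.support h ∩ Ioc 0 ε) := measure_mono hsubset
  have hle : ∫ x in Ioc (0:ℝ) ε, h x ≤ ∫ x in Ioc (0:ℝ) γ, h x :=
    setIntegral_mono_set hinth hnn_ae (Ioc_subset_Ioc_right hεγ).eventuallyLE
  have : 0 < ∫ x in Ioc (0:ℝ) γ, h x := lt_of_lt_of_le hpos hle
  rw [hdef] at this
  rw [integral_sub hintb hinta] at this
  linarith

lemma F_tendsto (hb_nonneg : ∀ x, 0 ≤ x → 0 ≤ b x) (hb_anti : AntitoneOn b (Set.Ici 0))
    (hb_int : IntegrableOn b (Set.Ici 0))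
    {γ₀ C : ℝ} (hγ₀ : 0 < γ₀) (hC : b 0 * C < 1)
    {γs ξs : ℕ → ℝ} {ℓ : ℝ}
    (hγb : ∀ n, γs n ≤ γ₀ + 1) (hγlim : Tendsto γs atTop (nhds γ₀))
    (hξ : ∀ n, ξs n ∈ Icc 0 C) (hℓ : ℓ ∈ Icc (0:ℝ) C) (hξlim : Tendsto ξs atTop (nhds ℓ)) :
    Tendsto (fun n => ∫ x in Ioc 0 (γs n), (b x * ξs n / (1 - b x * ξs n))^2) atTop
      (nhds (∫ x in Ioc 0 γ₀, (b x * ℓ / (1 - b x * ℓ))^2)) := by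
  set Γ := γ₀ + 1 with hΓ
  have hγ₀Γ : γ₀ ≤ Γ := by simp [hΓ]
  have hbound : ∀ (ξ : ℝ), ξ ∈ Icc (0:ℝ) C → ∀ x, 0 < x →
      0 ≤ b x * ξ ∧ b x * ξ ≤ b 0 * C := by
    intro ξ hξm x hx
    have h1 : b x ≤ b 0 := hb_anti self_mem_Ici hx.le hx.le
    have h0 : 0 ≤ b x := hb_nonneg x hx.le
    exact ⟨mul_nonneg h0 hξm.1, mul_le_mul h1 hξm.2 hξm.1 (hb_nonneg 0 le_rfl)⟩
  have hrw : ∀ (γ ξ : ℝ), γ ≤ Γ →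
      ∫ x in Ioc (0:ℝ) γ, (b x * ξ / (1 - b x * ξ))^2 =
      ∫ x in Ioc (0:ℝ) Γ, (Ioc (0:ℝ) γ).indicator (fun y => (b y * ξ / (1 - b y * ξ))^2) x := by
    intro γ ξ hγΓ
    rw [integral_indicator measurableSet_Ioc, Measure.restrict_restrict measurableSet_Ioc,
      inter_eq_left.2 (Ioc_subset_Ioc_right hγΓ)]
  have hrw' : ∀ n, ∫ x in Ioc (0:ℝ) (γs n), (b x * ξs n / (1 - b x * ξs n))^2 =
      ∫ x in Ioc (0:ℝ) Γ, (Ioc (0:ℝ) (γs n)).indicator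
        (fun y => (b y * ξs n / (1 - b y * ξs n))^2) x :=
    fun n => hrw (γs n) (ξs n) (hγb n)
  rw [hrw γ₀ ℓ hγ₀Γ]
  simp only [hrw']
  set M : ℝ := (b 0 * C / (1 - b 0 * C))^2 with hM
  apply tendsto_integral_of_dominated_convergence (bound := fun _ => M)
  · intro n
    exact (g_aesm hb_int (ξs n) Γ).indicator measurableSet_Ioc
  · exact integrableOn_const measure_Ioc_lt_top.ne
  · intro n
    refine Eventually.of_forall (fun x => ?_)
    by_cases hx : x ∈ Ioc (0:ℝ) (γs n)
    · rw [indicator_of_mem hx]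
      obtain ⟨hu0, huv⟩ := hbound (ξs n) (hξ n) x hx.1
      rw [Real.norm_eq_abs, abs_of_nonneg (sq_nonneg _)]
      have h2 : 0 < 1 - b 0 * C := by linarith
      have h3 : 0 < 1 - b x * ξs n := by linarith
      have h : b x * ξs n/(1-b x * ξs n) ≤ b 0 * C/(1-b 0 * C) := by
        rw [div_le_div_iff₀ h3 h2]; nlinarith
      exact pow_le_pow_left₀ (div_nonneg hu0 h3.le) h 2
    · rw [indicator_of_notMem hx]
      simp only [norm_zero, hM]
      positivity
  · have hne : ∀ᵐ x ∂(volume.restrict (Ioc (0:ℝ) Γ)), x ≠ γ₀ := by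
      have h0 : ∀ᵐ x : ℝ, x ≠ γ₀ := by
        rw [ae_iff]
        have hset : {x : ℝ | ¬ x ≠ γ₀} = {γ₀} := by ext x; simp
        rw [hset]; exact measure_singleton γ₀
      exact ae_restrict_of_ae h0
    filter_upwards [hne] with x hx
    rcases le_or_gt x 0 with hx0 | hx0
    · have hz : ∀ n, (Ioc (0:ℝ) (γs n)).indicator
          (fun y => (b y * ξs n / (1 - b y * ξs n))^2) x = 0 :=
        fun n => indicator_of_notMem (fun hc : x ∈ Ioc (0:ℝ) (γs n) =>
          absurd hc.1 (not_lt.2 hx0)) _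
      have hz' : (Ioc (0:ℝ) γ₀).indicator (fun y => (b y * ℓ / (1 - b y * ℓ))^2) x = 0 :=
        indicator_of_notMem (fun hc : x ∈ Ioc (0:ℝ) γ₀ => absurd hc.1 (not_lt.2 hx0)) _
      rw [hz']
      simp only [hz]
      exact tendsto_const_nhds
    · rcases lt_or_gt_of_ne hx with hlt | hgt
      · have hev : ∀ᶠ n in atTop, x < γs n := hγlim (Ioi_mem_nhds hlt)
        have hden : (1:ℝ) - b x * ℓ ≠ 0 := by
          obtain ⟨hu0, huv⟩ := hbound ℓ hℓ x hx0
          have : b x * ℓ < 1 := lt_of_le_of_lt huv hC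
          linarith
        have hcont : ContinuousAt (fun ξ : ℝ => (b x * ξ / (1 - b x * ξ))^2) ℓ := by
          apply ContinuousAt.pow
          exact ContinuousAt.div (continuousAt_const.mul continuousAt_id)
            (continuousAt_const.sub (continuousAt_const.mul continuousAt_id)) hden
        have hlim : Tendsto (fun n => (b x * ξs n / (1 - b x * ξs n))^2) atTop
            (nhds ((b x * ℓ / (1 - b x * ℓ))^2)) := hcont.tendsto.comp hξlim
        have heq : (Ioc (0:ℝ) γ₀).indicator (fun y => (b y * ℓ / (1 - b y * ℓ))^2) x =
            (b x * ℓ / (1 - b x * ℓ))^2 :=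
          indicator_of_mem (show x ∈ Ioc (0:ℝ) γ₀ from ⟨hx0, hlt.le⟩) _
        rw [heq]
        refine Tendsto.congr' ?_ hlim
        filter_upwards [hev] with n hn
        exact (indicator_of_mem (show x ∈ Ioc (0:ℝ) (γs n) from ⟨hx0, hn.le⟩)
          (fun y => (b y * ξs n / (1 - b y * ξs n))^2)).symm
      · have hev : ∀ᶠ n in atTop, γs n < x := hγlim (Iio_mem_nhds hgt)
        have heq : (Ioc (0:ℝ) γ₀).indicator (fun y => (b y * ℓ / (1 - b y * ℓ))^2) x = 0 :=
          indicator_of_notMem (fun hc : x ∈ Ioc (0:ℝ) γ₀ => absurd hc.2 (not_le.2 hgt)) _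
        rw [heq]
        refine Tendsto.congr' ?_ tendsto_const_nhds
        filter_upwards [hev] with n hn
        exact (indicator_of_notMem (fun hc : x ∈ Ioc (0:ℝ) (γs n) =>
          absurd hc.2 (not_le.2 hn)) (fun y => (b y * ξs n / (1 - b y * ξs n))^2)).symm

end XiAux

theorem xi_antitone_continuous
    -- the bulk function b : [0,∞) → [0,∞), non-increasing, b(0) > 0,
    -- Lipschitz continuous at 0, with ∫_0^∞ b(x) dx < ∞
    (b : ℝ → ℝ)
    (hb_nonneg : ∀ x, 0 ≤ x → 0 ≤ b x)
    (hb_anti : AntitoneOn b (Set.Ici 0))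
    (hb0 : 0 < b 0)
    (hb_lip : ∃ L δ : ℝ, 0 < δ ∧ ∀ x ∈ Set.Icc (0:ℝ) δ, |b x - b 0| ≤ L * x)
    (hb_int : IntegrableOn b (Set.Ici 0))
    -- ξ(γ) : the unique solution in (0, 1/b(0)) of ∫_0^γ (b(x)ξ/(1-b(x)ξ))² dx = 1
    (ξfun : ℝ → ℝ)
    (hξfun : ∀ γ : ℝ, 0 < γ → ξfun γ ∈ Set.Ioo 0 (1 / b 0) ∧
      ∫ x in Set.Ioc (0:ℝ) γ, (b x * ξfun γ / (1 - b x * ξfun γ)) ^ 2 = 1)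
 :
    -- Conclusion: ξ is monotonically decreasing and continuous on (0,∞)
    AntitoneOn ξfun (Set.Ioi 0) ∧ ContinuousOn ξfun (Set.Ioi 0) := by
  have hanti : AntitoneOn ξfun (Set.Ioi 0) := by
    intro γ₁ h1 γ₂ h2 h12
    by_contra hcon
    push_neg at hcon
    obtain ⟨⟨hp1, hq1⟩, hI1⟩ := hξfun γ₁ h1
    obtain ⟨⟨hp2, hq2⟩, hI2⟩ := hξfun γ₂ h2
    have hb02 : b 0 * ξfun γ₂ < 1 := by
      have := (lt_div_iff₀ hb0).1 hq2; nlinarith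
    have hstrict := XiAux.F_strict hb_nonneg hb_anti hb0 hb_lip hb_int h1 hp1.le hcon hb02
    have hmono : (∫ x in Set.Ioc (0:ℝ) γ₁, (b x * ξfun γ₂ / (1 - b x * ξfun γ₂))^2) ≤
        ∫ x in Set.Ioc (0:ℝ) γ₂, (b x * ξfun γ₂ / (1 - b x * ξfun γ₂))^2 :=
      setIntegral_mono_set (XiAux.g_int hb_nonneg hb_anti hb_int γ₂ hp2.le le_rfl hb02)
        (Eventually.of_forall fun x => sq_nonneg _)
        (HasSubset.Subset.eventuallyLE (Ioc_subset_Ioc_right h12))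
    rw [hI1] at hstrict
    rw [hI2] at hmono
    linarith
  refine ⟨hanti, ?_⟩
  intro γ₀ hγ₀mem
  have hγ₀ : (0:ℝ) < γ₀ := hγ₀mem
  obtain ⟨⟨hp0, hq0⟩, hI0⟩ := hξfun γ₀ hγ₀
  have hb00 : b 0 * ξfun γ₀ < 1 := by
    have := (lt_div_iff₀ hb0).1 hq0; nlinarith
  -- key claim
  have key : ∀ γs : ℕ → ℝ, (∀ n, 0 < γs n) → (∀ n, γs n ≤ γ₀ + 1) →
      Tendsto γs atTop (nhds γ₀) → ∀ C : ℝ, b 0 * C < 1 → (∀ n, ξfun (γs n) ≤ C) →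
      ∀ ℓ : ℝ, ℓ ∈ Set.Icc 0 C → Tendsto (fun n => ξfun (γs n)) atTop (nhds ℓ) →
      ℓ = ξfun γ₀ := by
    intro γs hpos hle hlim C hC hub ℓ hℓ hξlim
    have h1 : ∀ n, ∫ x in Set.Ioc (0:ℝ) (γs n),
        (b x * ξfun (γs n) / (1 - b x * ξfun (γs n)))^2 = 1 :=
      fun n => (hξfun (γs n) (hpos n)).2
    have hT := XiAux.F_tendsto hb_nonneg hb_anti hb_int hγ₀ hC hle hlim
      (fun n => ⟨(hξfun (γs n) (hpos n)).1.1.le, hub n⟩) hℓ hξlim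
    have hFℓ : ∫ x in Set.Ioc (0:ℝ) γ₀, (b x * ℓ / (1 - b x * ℓ))^2 = 1 :=
      tendsto_nhds_unique (hT.congr h1) tendsto_const_nhds
    rcases lt_trichotomy ℓ (ξfun γ₀) with h | h | h
    · exfalso
      have := XiAux.F_strict hb_nonneg hb_anti hb0 hb_lip hb_int hγ₀ hℓ.1 h hb00
      rw [hFℓ, hI0] at this
      exact lt_irrefl _ this
    · exact h
    · exfalso
      have hbℓ : b 0 * ℓ < 1 := lt_of_le_of_lt (mul_le_mul_of_nonneg_left hℓ.2 hb0.le) hC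
      have := XiAux.F_strict hb_nonneg hb_anti hb0 hb_lip hb_int hγ₀ hp0.le h hbℓ
      rw [hFℓ, hI0] at this
      exact lt_irrefl _ this
  -- right sequence
  set R : ℕ → ℝ := fun n => γ₀ + 1/((n:ℝ)+1) with hRdef
  have hRinv : ∀ n : ℕ, (0:ℝ) < 1/((n:ℝ)+1) := fun n => by positivity
  have hRinv1 : ∀ n : ℕ, 1/((n:ℝ)+1) ≤ 1 := fun n => by
    rw [div_le_one (by positivity)]
    have : (0:ℝ) ≤ (n:ℝ) := Nat.cast_nonneg n
    linarith
  have hRpos : ∀ n, 0 < R n := fun n => by have := hRinv n; simp only [hRdef]; linarith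
  have hRgt : ∀ n, γ₀ < R n := fun n => by have := hRinv n; simp only [hRdef]; linarith
  have hRle : ∀ n, R n ≤ γ₀ + 1 := fun n => by have := hRinv1 n; simp only [hRdef]; linarith
  have hRlim : Tendsto R atTop (nhds γ₀) := by
    have := (tendsto_const_nhds : Tendsto (fun _ : ℕ => γ₀) atTop (nhds γ₀)).add
      tendsto_one_div_add_atTop_nhds_zero_nat
    simpa [hRdef, one_div] using this
  have hRmono : Monotone fun n => ξfun (R n) := by
    intro n m hnm
    have hcast : (n:ℝ) + 1 ≤ (m:ℝ) + 1 := by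
      have := (Nat.cast_le (α := ℝ)).2 hnm; linarith
    have hseq : R m ≤ R n := by
      have := one_div_le_one_div_of_le (by positivity : (0:ℝ) < (n:ℝ)+1) hcast
      simp only [hRdef]; linarith
    exact hanti (Set.mem_Ioi.2 (hRpos m)) (Set.mem_Ioi.2 (hRpos n)) hseq
  have hubR : ∀ n, ξfun (R n) ≤ ξfun γ₀ :=
    fun n => hanti hγ₀mem (Set.mem_Ioi.2 (hRpos n)) (hRgt n).le
  have hRbdd : BddAbove (Set.range fun n => ξfun (R n)) := by
    refine ⟨ξfun γ₀, ?_⟩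
    rintro x ⟨n, rfl⟩
    exact hubR n
  have hRt : Tendsto (fun n => ξfun (R n)) atTop (nhds (⨆ n, ξfun (R n))) :=
    tendsto_atTop_ciSup hRmono hRbdd
  have hξple : (⨆ n, ξfun (R n)) ≤ ξfun γ₀ := ciSup_le hubR
  have hξp0 : 0 ≤ ⨆ n, ξfun (R n) :=
    le_trans (hξfun (R 0) (hRpos 0)).1.1.le (le_ciSup hRbdd 0)
  have hReq : (⨆ n, ξfun (R n)) = ξfun γ₀ :=
    key R hRpos hRle hRlim (ξfun γ₀) hb00 hubR _ ⟨hξp0, hξple⟩ hRt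
  have hRt' : Tendsto (fun n => ξfun (R n)) atTop (nhds (ξfun γ₀)) := hReq ▸ hRt
  -- left sequence
  set Lq : ℕ → ℝ := fun n => γ₀ - (γ₀/2) * (1/((n:ℝ)+1)) with hLdef
  have hLub : ∀ n : ℕ, (γ₀/2) * (1/((n:ℝ)+1)) ≤ γ₀/2 := fun n => by
    have h1 := hRinv1 n
    have h2 := hRinv n
    nlinarith
  have hLpos : ∀ n, 0 < Lq n := fun n => by
    have := hLub n; simp only [hLdef]; linarith
  have hLlt : ∀ n, Lq n < γ₀ := fun n => by
    have h2 := hRinv n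
    have : 0 < (γ₀/2) * (1/((n:ℝ)+1)) := by positivity
    simp only [hLdef]; linarith
  have hLge : ∀ n, γ₀/2 ≤ Lq n := fun n => by
    have := hLub n; simp only [hLdef]; linarith
  have hLle : ∀ n, Lq n ≤ γ₀ + 1 := fun n => by linarith [hLlt n]
  have hLlim : Tendsto Lq atTop (nhds γ₀) := by
    have := (tendsto_const_nhds : Tendsto (fun _ : ℕ => γ₀) atTop (nhds γ₀)).sub
      ((tendsto_const_nhds : Tendsto (fun _ : ℕ => γ₀/2) atTop (nhds (γ₀/2))).mul
        tendsto_one_div_add_atTop_nhds_zero_nat)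
    simpa [hLdef, one_div] using this
  have hγhmem : (γ₀/2) ∈ Set.Ioi (0:ℝ) := Set.mem_Ioi.2 (half_pos hγ₀)
  have hCL1 : b 0 * ξfun (γ₀/2) < 1 := by
    have := (lt_div_iff₀ hb0).1 (hξfun (γ₀/2) (half_pos hγ₀)).1.2; nlinarith
  have hubL : ∀ n, ξfun (Lq n) ≤ ξfun (γ₀/2) :=
    fun n => hanti hγhmem (Set.mem_Ioi.2 (hLpos n)) (hLge n)
  have hLanti : Antitone fun n => ξfun (Lq n) := by
    intro n m hnm
    have hcast : (n:ℝ) + 1 ≤ (m:ℝ) + 1 := by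
      have := (Nat.cast_le (α := ℝ)).2 hnm; linarith
    have hseq : Lq n ≤ Lq m := by
      have h1 := one_div_le_one_div_of_le (by positivity : (0:ℝ) < (n:ℝ)+1) hcast
      have h3 : 0 ≤ γ₀/2 := (half_pos hγ₀).le
      have := mul_le_mul_of_nonneg_left h1 h3
      simp only [hLdef]; linarith
    exact hanti (Set.mem_Ioi.2 (hLpos n)) (Set.mem_Ioi.2 (hLpos m)) hseq
  have hLbdd : BddBelow (Set.range fun n => ξfun (Lq n)) := by
    refine ⟨0, ?_⟩
    rintro x ⟨n, rfl⟩
    exact (hξfun (Lq n) (hLpos n)).1.1.le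
  have hLt : Tendsto (fun n => ξfun (Lq n)) atTop (nhds (⨅ n, ξfun (Lq n))) :=
    tendsto_atTop_ciInf hLanti hLbdd
  have hξm0 : 0 ≤ ⨅ n, ξfun (Lq n) :=
    le_ciInf fun n => (hξfun (Lq n) (hLpos n)).1.1.le
  have hξmC : (⨅ n, ξfun (Lq n)) ≤ ξfun (γ₀/2) :=
    le_trans (ciInf_le hLbdd 0) (hubL 0)
  have hLeq : (⨅ n, ξfun (Lq n)) = ξfun γ₀ :=
    key Lq hLpos hLle hLlim (ξfun (γ₀/2)) hCL1 hubL _ ⟨hξm0, hξmC⟩ hLt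
  have hLt' : Tendsto (fun n => ξfun (Lq n)) atTop (nhds (ξfun γ₀)) := hLeq ▸ hLt
  -- ε-δ continuity
  refine ContinuousAt.continuousWithinAt ?_
  rw [Metric.continuousAt_iff]
  intro ε hε
  obtain ⟨N₁, hN₁⟩ := Metric.tendsto_atTop.1 hRt' ε hε
  obtain ⟨N₂, hN₂⟩ := Metric.tendsto_atTop.1 hLt' ε hε
  set N := max N₁ N₂ with hNdef
  have hd1 : dist (ξfun (R N)) (ξfun γ₀) < ε := hN₁ N (le_max_left _ _)
  have hd2 : dist (ξfun (Lq N)) (ξfun γ₀) < ε := hN₂ N (le_max_right _ _)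
  refine ⟨min (R N - γ₀) (γ₀ - Lq N),
    lt_min (by linarith [hRgt N]) (by linarith [hLlt N]), ?_⟩
  intro γ hγd
  have hγd' : |γ - γ₀| < min (R N - γ₀) (γ₀ - Lq N) := by rwa [Real.dist_eq] at hγd
  have habs := abs_lt.1 hγd'
  have hminl := min_le_left (R N - γ₀) (γ₀ - Lq N)
  have hminr := min_le_right (R N - γ₀) (γ₀ - Lq N)
  have h1 : Lq N < γ := by linarith [habs.1]
  have h2 : γ < R N := by linarith [habs.2]
  have hγpos : (0:ℝ) < γ := lt_trans (hLpos N) h1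
  have hub' : ξfun γ ≤ ξfun (Lq N) :=
    hanti (Set.mem_Ioi.2 (hLpos N)) (Set.mem_Ioi.2 hγpos) h1.le
  have hlb' : ξfun (R N) ≤ ξfun γ :=
    hanti (Set.mem_Ioi.2 hγpos) (Set.mem_Ioi.2 (hRpos N)) h2.le
  rw [Real.dist_eq] at hd1 hd2 ⊢
  have a1 := abs_lt.1 hd1
  have a2 := abs_lt.1 hd2
  rw [abs_lt]
  constructor <;> [linarith [a1.1]; linarith [a2.2]]

end
end

section
/- Convergence of the criticality parameter to its infinite-horizon limit (Lemma 1, part (b)): As γ → ∞, ξ(γ) converges to ξ(∞), where ξ(∞) is the unique solution ξ* ∈ (0, 1/b(0)) of ∫_0^∞ (b(x)ξ*/(1 − b(x)ξ*))^2 dx = 1. -/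
open MeasureTheory ProbabilityTheory Filter Set
open scoped RealInnerProductSpace ENNReal NNReal

noncomputable section

theorem xi_tendsto_xi_inf
    -- the bulk function b : [0,∞) → [0,∞), non-increasing, b(0) > 0,
    -- Lipschitz continuous at 0, with ∫_0^∞ b(x) dx < ∞
    (b : ℝ → ℝ)
    (hb_nonneg : ∀ x, 0 ≤ x → 0 ≤ b x)
    (hb_anti : AntitoneOn b (Set.Ici 0))
    (hb0 : 0 < b 0)
    (hb_lip : ∃ L δ : ℝ, 0 < δ ∧ ∀ x ∈ Set.Icc (0:ℝ) δ, |b x - b 0| ≤ L * x)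
    (hb_int : IntegrableOn b (Set.Ici 0))
    -- ξ(γ) : the unique solution in (0, 1/b(0)) of ∫_0^γ (b(x)ξ/(1-b(x)ξ))² dx = 1
    (ξfun : ℝ → ℝ)
    (hξfun : ∀ γ : ℝ, 0 < γ → ξfun γ ∈ Set.Ioo 0 (1 / b 0) ∧
      ∫ x in Set.Ioc (0:ℝ) γ, (b x * ξfun γ / (1 - b x * ξfun γ)) ^ 2 = 1)
    -- the critical parameter ξ(∞)
    (ξinf : ℝ) (hξ_mem : ξinf ∈ Set.Ioo 0 (1 / b 0))
    (hξ_eq : ∫ x in Set.Ici (0:ℝ), (b x * ξinf / (1 - b x * ξinf)) ^ 2 = 1)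
 :
    -- Conclusion: ξ(γ) → ξ(∞) as γ → ∞
    Tendsto ξfun atTop (nhds ξinf) := by
  obtain ⟨hξi0, hξi1⟩ := hξ_mem
  -- basic facts about b
  have hble : ∀ x : ℝ, 0 ≤ x → b x ≤ b 0 := fun x hx =>
    hb_anti (mem_Ici.mpr le_rfl) (mem_Ici.mpr hx) hx
  have hnn : ∀ ξ : ℝ, 0 ≤ ξ → ∀ x : ℝ, 0 ≤ x → 0 ≤ b x * ξ := fun ξ hξ x hx =>
    mul_nonneg (hb_nonneg x hx) hξ
  have hlt1 : ∀ ξ : ℝ, 0 ≤ ξ → ξ < 1 / b 0 → ∀ x : ℝ, 0 ≤ x → b x * ξ < 1 := by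
    intro ξ hξ0 hξ1 x hx
    have h1 : ξ * b 0 < 1 := (lt_div_iff₀ hb0).mp hξ1
    have h2 : b x * ξ ≤ b 0 * ξ := mul_le_mul_of_nonneg_right (hble x hx) hξ0
    nlinarith
  -- pointwise monotonicity in ξ
  have hmono_pt : ∀ ξ₁ ξ₂ : ℝ, 0 ≤ ξ₁ → ξ₁ ≤ ξ₂ → ξ₂ < 1 / b 0 → ∀ x : ℝ, 0 ≤ x →
      (b x * ξ₁ / (1 - b x * ξ₁)) ^ 2 ≤ (b x * ξ₂ / (1 - b x * ξ₂)) ^ 2 := by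
    intro ξ₁ ξ₂ h0 h12 h2 x hx
    have hs0 := hnn ξ₁ h0 x hx
    have hs1 := hlt1 ξ₁ h0 (lt_of_le_of_lt h12 h2) x hx
    have ht1 := hlt1 ξ₂ (h0.trans h12) h2 x hx
    have hst : b x * ξ₁ ≤ b x * ξ₂ := mul_le_mul_of_nonneg_left h12 (hb_nonneg x hx)
    have h1s : 0 < 1 - b x * ξ₁ := by linarith
    have h1t : 0 < 1 - b x * ξ₂ := by linarith
    have hdiv : b x * ξ₁ / (1 - b x * ξ₁) ≤ b x * ξ₂ / (1 - b x * ξ₂) := by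
      rw [div_le_div_iff₀ h1s h1t]; nlinarith
    exact pow_le_pow_left₀ (div_nonneg hs0 h1s.le) hdiv 2
  have hstrict_pt : ∀ ξ₁ ξ₂ : ℝ, 0 ≤ ξ₁ → ξ₁ < ξ₂ → ξ₂ < 1 / b 0 → ∀ x : ℝ, 0 ≤ x → 0 < b x →
      (b x * ξ₁ / (1 - b x * ξ₁)) ^ 2 < (b x * ξ₂ / (1 - b x * ξ₂)) ^ 2 := by
    intro ξ₁ ξ₂ h0 h12 h2 x hx hbx
    have hs0 := hnn ξ₁ h0 x hx
    have hs1 := hlt1 ξ₁ h0 (h12.trans h2) x hx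
    have ht1 := hlt1 ξ₂ (h0.trans h12.le) h2 x hx
    have hst : b x * ξ₁ < b x * ξ₂ := mul_lt_mul_of_pos_left h12 hbx
    have h1s : 0 < 1 - b x * ξ₁ := by linarith
    have h1t : 0 < 1 - b x * ξ₂ := by linarith
    have hdiv : b x * ξ₁ / (1 - b x * ξ₁) < b x * ξ₂ / (1 - b x * ξ₂) := by
      rw [div_lt_div_iff₀ h1s h1t]; nlinarith
    exact pow_lt_pow_left₀ hdiv (div_nonneg hs0 h1s.le) (by norm_num)
  -- positivity of b near 0
  obtain ⟨L, δ, hδ, hLip⟩ := hb_lip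
  obtain ⟨δ', hδ'0, hδ'pos⟩ : ∃ δ' : ℝ, 0 < δ' ∧ ∀ x ∈ Icc (0:ℝ) δ', 0 < b x := by
    set M := max L 1 with hM
    have hM1 : (1:ℝ) ≤ M := le_max_right _ _
    have hM0 : (0:ℝ) < M := lt_of_lt_of_le one_pos hM1
    refine ⟨min δ (b 0 / (2 * M)), lt_min hδ (by positivity), ?_⟩
    rintro x ⟨hx0, hx1⟩
    have h1 : |b x - b 0| ≤ L * x := hLip x ⟨hx0, hx1.trans (min_le_left _ _)⟩
    have h2 : L * x ≤ M * x := mul_le_mul_of_nonneg_right (le_max_left _ _) hx0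
    have h3 : M * x ≤ M * (b 0 / (2 * M)) :=
      mul_le_mul_of_nonneg_left (hx1.trans (min_le_right _ _)) hM0.le
    have h4 : M * (b 0 / (2 * M)) = b 0 / 2 := by field_simp
    have h5 := abs_le.mp h1
    linarith [h5.1, h5.2]
  -- measurability
  have hmeas : ∀ ξ : ℝ, AEStronglyMeasurable (fun x => (b x * ξ / (1 - b x * ξ)) ^ 2)
      (volume.restrict (Ici (0:ℝ))) := by
    intro ξ
    have hbm : AEMeasurable b (volume.restrict (Ici (0:ℝ))) := hb_int.aemeasurable
    exact ((((hbm.mul_const ξ)).div (aemeasurable_const.sub (hbm.mul_const ξ))).pow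
      aemeasurable_const).aestronglyMeasurable
  -- integrability
  have hInt : ∀ ξ : ℝ, 0 ≤ ξ → ξ < 1 / b 0 →
      IntegrableOn (fun x => (b x * ξ / (1 - b x * ξ)) ^ 2) (Ici (0:ℝ)) := by
    intro ξ hξ0 hξ1
    have hb0ξ : b 0 * ξ < 1 := hlt1 ξ hξ0 hξ1 0 le_rfl
    refine Integrable.mono' (hb_int.const_mul (ξ ^ 2 * b 0 / (1 - b 0 * ξ) ^ 2)) (hmeas ξ) ?_
    rw [ae_restrict_iff' measurableSet_Ici]
    refine ae_of_all _ fun x hx => ?_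
    rw [mem_Ici] at hx
    have h1 : 0 ≤ b x * ξ := hnn ξ hξ0 x hx
    have h2 : b x * ξ < 1 := hlt1 ξ hξ0 hξ1 x hx
    have h3 : b x * ξ ≤ b 0 * ξ := mul_le_mul_of_nonneg_right (hble x hx) hξ0
    have h4 : (0:ℝ) < 1 - b 0 * ξ := by linarith
    have h5 : (0:ℝ) < 1 - b x * ξ := by linarith
    have hbx0 := hb_nonneg x hx
    have hbxle := hble x hx
    rw [Real.norm_eq_abs, abs_of_nonneg (sq_nonneg _), div_pow, div_le_iff₀ (by positivity),
      div_mul_eq_mul_div, div_mul_eq_mul_div, le_div_iff₀ (by positivity)]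
    have e1 : (b x * ξ) ^ 2 ≤ ξ ^ 2 * b 0 * b x := by
      nlinarith [mul_le_mul_of_nonneg_left (mul_le_mul_of_nonneg_left hbxle hbx0) (sq_nonneg ξ)]
    have e2 : (1 - b 0 * ξ) ^ 2 ≤ (1 - b x * ξ) ^ 2 := pow_le_pow_left₀ h4.le (by linarith) 2
    have e3 := mul_le_mul e1 e2 (sq_nonneg _)
      (mul_nonneg (mul_nonneg (sq_nonneg ξ) hb0.le) hbx0)
    nlinarith [e3]
  have hIocIci : ∀ γ : ℝ, Ioc (0:ℝ) γ ⊆ Ici (0:ℝ) := fun γ x hx => hx.1.le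
  -- monotonicity of F in the set
  have hFmono_set : ∀ ξ : ℝ, 0 ≤ ξ → ξ < 1 / b 0 → ∀ s : Set ℝ, s ⊆ Ici 0 →
      (∫ x in s, (b x * ξ / (1 - b x * ξ)) ^ 2) ≤
        ∫ x in Ici (0:ℝ), (b x * ξ / (1 - b x * ξ)) ^ 2 :=
    fun ξ h0 h1 s hs => setIntegral_mono_set (hInt ξ h0 h1)
      (ae_of_all _ fun x => sq_nonneg _) (HasSubset.Subset.eventuallyLE hs)
  -- strict monotonicity of F in ξ
  have hFstrict : ∀ s : Set ℝ, MeasurableSet s → s ⊆ Ici 0 → (∃ m, 0 < m ∧ Ioc 0 m ⊆ s) →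
      ∀ ξ₁ ξ₂ : ℝ, 0 ≤ ξ₁ → ξ₁ < ξ₂ → ξ₂ < 1 / b 0 →
      (∫ x in s, (b x * ξ₁ / (1 - b x * ξ₁)) ^ 2) <
        ∫ x in s, (b x * ξ₂ / (1 - b x * ξ₂)) ^ 2 := by
    rintro s hsmeas hsub ⟨m, hm, hms⟩ ξ₁ ξ₂ h0 h12 h2
    have hI1 : IntegrableOn (fun x => (b x * ξ₁ / (1 - b x * ξ₁)) ^ 2) s :=
      (hInt ξ₁ h0 (h12.trans h2)).mono_set hsub
    have hI2 : IntegrableOn (fun x => (b x * ξ₂ / (1 - b x * ξ₂)) ^ 2) s :=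
      (hInt ξ₂ (h0.trans h12.le) h2).mono_set hsub
    have hdiff : 0 < ∫ x in s,
        ((b x * ξ₂ / (1 - b x * ξ₂)) ^ 2 - (b x * ξ₁ / (1 - b x * ξ₁)) ^ 2) := by
      refine (setIntegral_pos_iff_support_of_nonneg_ae ?hnn (hI2.sub hI1)).mpr ?_
      case hnn =>
        exact (ae_restrict_iff' hsmeas).mpr (ae_of_all _ fun x hx =>
          sub_nonneg.mpr (hmono_pt ξ₁ ξ₂ h0 h12.le h2 x (hsub hx)))
      · refine lt_of_lt_of_le ?_ (measure_mono
          (?_ : Ioc 0 (min m δ') ⊆ Function.support _ ∩ s))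
        · rw [Real.volume_Ioc]
          simp only [sub_zero]
          exact ENNReal.ofReal_pos.mpr (lt_min hm hδ'0)
        · intro x hx
          have hx0 : 0 < x := hx.1
          have hxs : x ∈ s := hms ⟨hx0, hx.2.trans (min_le_left _ _)⟩
          have hbx : 0 < b x := hδ'pos x ⟨hx0.le, hx.2.trans (min_le_right _ _)⟩
          refine ⟨?_, hxs⟩
          have hlt := hstrict_pt ξ₁ ξ₂ h0 h12 h2 x hx0.le hbx
          simp only [Function.mem_support, Pi.sub_apply]
          exact sub_ne_zero_of_ne hlt.ne'
    have hsubint := integral_sub hI2 hI1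
    rw [hsubint] at hdiff
    linarith
  -- antitonicity of ξfun
  have hanti : ∀ γ₁ γ₂ : ℝ, 0 < γ₁ → γ₁ ≤ γ₂ → ξfun γ₂ ≤ ξfun γ₁ := by
    intro γ₁ γ₂ hγ₁ h12
    by_contra hlt
    push_neg at hlt
    obtain ⟨⟨ha0, ha1⟩, haeq⟩ := hξfun γ₁ hγ₁
    obtain ⟨⟨hc0, hc1⟩, hceq⟩ := hξfun γ₂ (hγ₁.trans_le h12)
    have h1 : (∫ x in Ioc (0:ℝ) γ₁, (b x * ξfun γ₂ / (1 - b x * ξfun γ₂)) ^ 2)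
        ≤ ∫ x in Ioc (0:ℝ) γ₂, (b x * ξfun γ₂ / (1 - b x * ξfun γ₂)) ^ 2 :=
      setIntegral_mono_set ((hInt _ hc0.le hc1).mono_set (hIocIci γ₂))
        (ae_of_all _ fun x => sq_nonneg _)
        (HasSubset.Subset.eventuallyLE (Ioc_subset_Ioc_right h12))
    have h2 := hFstrict (Ioc 0 γ₁) measurableSet_Ioc (hIocIci γ₁)
      ⟨γ₁, hγ₁, subset_rfl⟩ (ξfun γ₁) (ξfun γ₂) ha0.le hlt hc1
    rw [haeq] at h2
    rw [hceq] at h1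
    linarith
  -- lower bound by ξinf
  have hlb : ∀ γ : ℝ, 0 < γ → ξinf ≤ ξfun γ := by
    intro γ hγ
    by_contra hlt
    push_neg at hlt
    obtain ⟨⟨ha0, _⟩, haeq⟩ := hξfun γ hγ
    have h2 := hFstrict (Ioc 0 γ) measurableSet_Ioc (hIocIci γ)
      ⟨γ, hγ, subset_rfl⟩ (ξfun γ) ξinf ha0.le hlt hξi1
    have h3 := hFmono_set ξinf hξi0.le hξi1 (Ioc 0 γ) (hIocIci γ)
    rw [haeq] at h2
    rw [hξ_eq] at h3
    linarith
  -- the limit along a monotone reparametrization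
  set g : ℝ → ℝ := fun γ => ξfun (max γ 1) with hg
  have hganti : Antitone g := fun γ₁ γ₂ h =>
    hanti (max γ₁ 1) (max γ₂ 1) (lt_of_lt_of_le one_pos (le_max_right _ _))
      (max_le_max h le_rfl)
  have hgbdd : BddBelow (range g) := by
    refine ⟨ξinf, ?_⟩
    rintro _ ⟨γ, rfl⟩
    exact hlb _ (lt_of_lt_of_le one_pos (le_max_right _ _))
  have hgtend : Tendsto g atTop (nhds (⨅ γ, g γ)) := tendsto_atTop_ciInf hganti hgbdd
  set ℓ := ⨅ γ, g γ with hℓ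
  have hℓ_ge : ξinf ≤ ℓ := le_ciInf fun γ => hlb _ (lt_of_lt_of_le one_pos (le_max_right _ _))
  have hℓ0 : 0 ≤ ℓ := hξi0.le.trans hℓ_ge
  have hℓ_lt : ℓ < 1 / b 0 := by
    refine lt_of_le_of_lt (ciInf_le hgbdd 1) ?_
    simpa [hg] using (hξfun 1 one_pos).1.2
  have hℓ_eq : ℓ = ξinf := by
    rcases eq_or_lt_of_le hℓ_ge with h | h
    · exact h.symm
    · exfalso
      have hle1 : ∀ n : ℕ, (∫ x in Ioc (0:ℝ) ((n:ℝ)+1), (b x * ℓ / (1 - b x * ℓ)) ^ 2) ≤ 1 := by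
        intro n
        have hn : (0:ℝ) < (n:ℝ) + 1 := by positivity
        obtain ⟨⟨ha0, ha1⟩, haeq⟩ := hξfun ((n:ℝ)+1) hn
        have hℓle : ℓ ≤ ξfun ((n:ℝ)+1) := by
          have h1 := ciInf_le hgbdd ((n:ℝ)+1)
          have hmax : max ((n:ℝ)+1) 1 = (n:ℝ)+1 := max_eq_left (le_add_of_nonneg_left (Nat.cast_nonneg n))
          simpa [hg, hmax] using h1
        calc (∫ x in Ioc (0:ℝ) ((n:ℝ)+1), (b x * ℓ / (1 - b x * ℓ)) ^ 2)
            ≤ ∫ x in Ioc (0:ℝ) ((n:ℝ)+1),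
              (b x * ξfun ((n:ℝ)+1) / (1 - b x * ξfun ((n:ℝ)+1))) ^ 2 := by
              refine setIntegral_mono_on ((hInt ℓ hℓ0 hℓ_lt).mono_set (hIocIci _))
                ((hInt _ ha0.le ha1).mono_set (hIocIci _)) measurableSet_Ioc ?_
              intro x hx
              exact hmono_pt ℓ (ξfun ((n:ℝ)+1)) hℓ0 hℓle ha1 x hx.1.le
          _ = 1 := haeq
      have hUnion : (⋃ n : ℕ, Ioc (0:ℝ) ((n:ℝ)+1)) = Ioi 0 := by
        ext x
        simp only [mem_iUnion, mem_Ioc, mem_Ioi]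
        constructor
        · rintro ⟨n, h1, _⟩; exact h1
        · intro hx
          obtain ⟨n, hn⟩ := exists_nat_ge x
          exact ⟨n, hx, hn.trans (by linarith)⟩
      have hIntℓ := hInt ℓ hℓ0 hℓ_lt
      have hmono_s : Monotone (fun n : ℕ => Ioc (0:ℝ) ((n:ℝ)+1)) := by
        intro n n' hnm
        apply Ioc_subset_Ioc_right
        have : (n:ℝ) ≤ (n':ℝ) := Nat.cast_le.mpr hnm
        linarith
      have htend := tendsto_setIntegral_of_monotone
        (f := fun x => (b x * ℓ / (1 - b x * ℓ)) ^ 2) (μ := volume)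
        (s := fun n : ℕ => Ioc (0:ℝ) ((n:ℝ)+1)) (fun n => measurableSet_Ioc)
        hmono_s
        (by rw [hUnion]; exact hIntℓ.mono_set Ioi_subset_Ici_self)
      rw [hUnion] at htend
      have hlim_le : (∫ x in Ioi (0:ℝ), (b x * ℓ / (1 - b x * ℓ)) ^ 2) ≤ 1 :=
        le_of_tendsto htend (Filter.Eventually.of_forall hle1)
      have hstrict := hFstrict (Ici 0) measurableSet_Ici (fun x hx => hx)
        ⟨1, one_pos, fun x hx => hx.1.le⟩ ξinf ℓ hξi0.le h hℓ_lt
      rw [hξ_eq] at hstrict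
      rw [← integral_Ici_eq_integral_Ioi] at hlim_le
      linarith
  have hev : g =ᶠ[atTop] ξfun := by
    filter_upwards [eventually_ge_atTop (1:ℝ)] with γ hγ
    simp [hg, max_eq_left hγ]
  exact Tendsto.congr' hev (hℓ_eq ▸ hgtend)

end
end

section
/- Continuity of ψ along the criticality parameter (Lemma 1, part (c)): As γ → ∞, ψ(1/ξ(γ)) converges to ψ(1/ξ(∞)), where ψ(y) = y(1 + ∫_0^∞ b(x)/(y − b(x)) dx) for y > b(0). -/
open MeasureTheory ProbabilityTheory Filter Set
open scoped RealInnerProductSpace ENNReal NNReal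

noncomputable section

section Aux
variable {b : ℝ → ℝ}

-- pointwise facts
lemma aux_bx_le (hb_anti : AntitoneOn b (Set.Ici 0)) {x : ℝ} (hx : 0 ≤ x) : b x ≤ b 0 :=
  hb_anti (self_mem_Ici) hx hx

lemma aux_denom_pos (hb_anti : AntitoneOn b (Set.Ici 0)) (hb0 : 0 < b 0)
    {ξ x : ℝ} (hξ0 : 0 ≤ ξ) (hξ1 : ξ < 1 / b 0) (hx : 0 ≤ x) :
    0 < 1 - b x * ξ := by
  have h1 : b x * ξ ≤ b 0 * ξ := mul_le_mul_of_nonneg_right (aux_bx_le hb_anti hx) hξ0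
  have h2 : b 0 * ξ < 1 := by
    rw [mul_comm]
    exact (lt_div_iff₀ hb0).mp hξ1
  linarith

lemma aux_f_nonneg {ξ x : ℝ} : 0 ≤ (b x * ξ / (1 - b x * ξ)) ^ 2 := sq_nonneg _

lemma aux_f_mono (hb_nonneg : ∀ x, 0 ≤ x → 0 ≤ b x) (hb_anti : AntitoneOn b (Set.Ici 0))
    (hb0 : 0 < b 0) {t s x : ℝ} (ht0 : 0 ≤ t) (hts : t ≤ s) (hs1 : s < 1 / b 0) (hx : 0 ≤ x) :
    (b x * t / (1 - b x * t)) ^ 2 ≤ (b x * s / (1 - b x * s)) ^ 2 := by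
  have hs0 : 0 ≤ s := ht0.trans hts
  have hDt : 0 < 1 - b x * t := aux_denom_pos hb_anti hb0 ht0 (hts.trans_lt hs1) hx
  have hDs : 0 < 1 - b x * s := aux_denom_pos hb_anti hb0 hs0 hs1 hx
  have ha : 0 ≤ b x := hb_nonneg x hx
  have hg : b x * t / (1 - b x * t) ≤ b x * s / (1 - b x * s) := by
    rw [div_le_div_iff₀ hDt hDs]
    nlinarith [mul_le_mul_of_nonneg_left hts ha]
  have hg0 : 0 ≤ b x * t / (1 - b x * t) := div_nonneg (mul_nonneg ha ht0) hDt.le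
  exact pow_le_pow_left₀ hg0 hg 2

-- strict gap on the set where b ≥ b0/2
lemma aux_f_gap (hb_nonneg : ∀ x, 0 ≤ x → 0 ≤ b x) (hb_anti : AntitoneOn b (Set.Ici 0))
    (hb0 : 0 < b 0) {t s x : ℝ} (ht0 : 0 ≤ t) (hts : t < s) (hs1 : s < 1 / b 0) (hx : 0 ≤ x)
    (hbx : b 0 / 2 ≤ b x) :
    (b x * t / (1 - b x * t)) ^ 2 + (b 0 / 2) ^ 2 * s * (s - t) ≤ (b x * s / (1 - b x * s)) ^ 2 := by
  have hs0 : 0 < s := ht0.trans_lt hts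
  have hDt : 0 < 1 - b x * t := aux_denom_pos hb_anti hb0 ht0 (hts.le.trans_lt hs1) hx
  have hDs : 0 < 1 - b x * s := aux_denom_pos hb_anti hb0 hs0.le hs1 hx
  have ha : 0 ≤ b x := hb_nonneg x hx
  set gt' := b x * t / (1 - b x * t) with hgt
  set gs' := b x * s / (1 - b x * s) with hgs
  have hg0 : 0 ≤ gt' := div_nonneg (mul_nonneg ha ht0) hDt.le
  have hgs0' : 0 ≤ b x * s := mul_nonneg ha hs0.le
  have hgt0' : 0 ≤ b x * t := mul_nonneg ha ht0
  have hgs_lb : b 0 / 2 * s ≤ gs' := by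
    rw [hgs, le_div_iff₀ hDs]
    nlinarith [mul_nonneg hs0.le (sub_nonneg.mpr hbx),
      mul_nonneg (mul_nonneg hb0.le hs0.le) hgs0']
  have hc0 : 0 ≤ b 0 / 2 * (s - t) := mul_nonneg (by positivity) (sub_nonneg.mpr hts.le)
  have hgap : gt' + b 0 / 2 * (s - t) ≤ gs' := by
    rw [hgt, hgs, div_add' _ _ _ hDt.ne', div_le_div_iff₀ hDt hDs]
    have hprod : (1 - b x * t) * (1 - b x * s) ≤ 1 := by nlinarith
    have hle : b 0 / 2 * (s - t) ≤ b x * (s - t) :=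
      mul_le_mul_of_nonneg_right hbx (sub_nonneg.mpr hts.le)
    have hfin : b 0 / 2 * (s - t) * ((1 - b x * t) * (1 - b x * s)) ≤ b x * (s - t) :=
      (mul_le_of_le_one_right hc0 hprod).trans hle
    nlinarith [hfin]
  have hgs0 : 0 ≤ gs' := hg0.trans (by linarith)
  have h1 : (gt' + b 0 / 2 * (s - t)) * gs' ≤ gs' * gs' :=
    mul_le_mul_of_nonneg_right hgap hgs0
  have h2 : gt' * gt' ≤ gt' * gs' := mul_le_mul_of_nonneg_left (by linarith) hg0
  have h3 : b 0 / 2 * (s - t) * (b 0 / 2 * s) ≤ b 0 / 2 * (s - t) * gs' :=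
    mul_le_mul_of_nonneg_left hgs_lb hc0
  nlinarith [h1, h2, h3]
end Aux


section Aux2
variable {b : ℝ → ℝ}

lemma aux_f_meas (hb_int : IntegrableOn b (Set.Ici 0)) (ξ : ℝ)
    {s : Set ℝ} (hs : s ⊆ Set.Ici 0) :
    AEStronglyMeasurable (fun x => (b x * ξ / (1 - b x * ξ)) ^ 2)
      (volume.restrict s) := by
  have hb : AEMeasurable b (volume.restrict (Set.Ici 0)) :=
    hb_int.aestronglyMeasurable.aemeasurable
  have hb' : AEMeasurable b (volume.restrict s) :=
    hb.mono_measure (Measure.restrict_mono hs le_rfl)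
  exact (((hb'.mul_const ξ).div (aemeasurable_const.sub (hb'.mul_const ξ))).pow_const
    2).aestronglyMeasurable

lemma aux_f_int (hb_nonneg : ∀ x, 0 ≤ x → 0 ≤ b x) (hb_anti : AntitoneOn b (Set.Ici 0))
    (hb0 : 0 < b 0) (hb_int : IntegrableOn b (Set.Ici 0))
    {ξ : ℝ} (hξ0 : 0 ≤ ξ) (hξ1 : ξ < 1 / b 0) :
    IntegrableOn (fun x => (b x * ξ / (1 - b x * ξ)) ^ 2) (Set.Ici 0) := by
  have hD0 : 0 < 1 - b 0 * ξ := by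
    have := (lt_div_iff₀ hb0).mp hξ1; linarith [mul_comm ξ (b 0)]
  set C : ℝ := b 0 * ξ ^ 2 / (1 - b 0 * ξ) ^ 2 with hC
  have hC0 : 0 ≤ C := by positivity
  refine Integrable.mono (hb_int.const_mul C) (aux_f_meas hb_int ξ (subset_rfl)) ?_
  rw [ae_restrict_iff' measurableSet_Ici]
  refine ae_of_all _ fun x hx => ?_
  have hx : (0:ℝ) ≤ x := hx
  have ha : 0 ≤ b x := hb_nonneg x hx
  have hab : b x ≤ b 0 := hb_anti self_mem_Ici hx hx
  have hD : 0 < 1 - b x * ξ := by nlinarith [mul_le_mul_of_nonneg_right hab hξ0]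
  have hDle : 1 - b 0 * ξ ≤ 1 - b x * ξ := by nlinarith [mul_le_mul_of_nonneg_right hab hξ0]
  have h1 : b x * ξ / (1 - b x * ξ) ≤ b x * ξ / (1 - b 0 * ξ) :=
    div_le_div_of_nonneg_left (mul_nonneg ha hξ0) hD0 hDle
  have h2 : (b x * ξ / (1 - b x * ξ)) ^ 2 ≤ (b x * ξ / (1 - b 0 * ξ)) ^ 2 :=
    pow_le_pow_left₀ (div_nonneg (mul_nonneg ha hξ0) hD.le) h1 2
  have h3 : (b x * ξ / (1 - b 0 * ξ)) ^ 2 ≤ C * b x := by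
    rw [div_pow, hC]
    rw [div_mul_eq_mul_div, div_le_div_iff₀ (by positivity) (by positivity)]
    nlinarith [mul_nonneg (mul_nonneg (sub_nonneg.mpr hab) ha)
      (mul_nonneg (sq_nonneg ξ) (sq_nonneg (1 - b 0 * ξ)))]
  rw [Real.norm_of_nonneg (sq_nonneg _), Real.norm_of_nonneg (mul_nonneg hC0 ha)]
  exact h2.trans h3
end Aux2


section Aux3
variable {b : ℝ → ℝ}

lemma aux_delta (hb0 : 0 < b 0)
    (hb_lip : ∃ L δ : ℝ, 0 < δ ∧ ∀ x ∈ Set.Icc (0:ℝ) δ, |b x - b 0| ≤ L * x) :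
    ∃ δ' : ℝ, 0 < δ' ∧ ∀ x ∈ Set.Icc (0:ℝ) δ', b 0 / 2 ≤ b x := by
  obtain ⟨L, δ, hδ, hL⟩ := hb_lip
  refine ⟨min δ (b 0 / (2 * (|L| + 1))), lt_min hδ (by positivity), fun x hx => ?_⟩
  obtain ⟨hx0, hx1⟩ := hx
  have h1 : |b x - b 0| ≤ L * x := hL x ⟨hx0, hx1.trans (min_le_left _ _)⟩
  have h2 : |b x - b 0| ≤ |L| * x := h1.trans (mul_le_mul_of_nonneg_right (le_abs_self L) hx0)
  have h3 : x ≤ b 0 / (2 * (|L| + 1)) := hx1.trans (min_le_right _ _)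
  have h4 : |L| * x ≤ |L| * (b 0 / (2 * (|L| + 1))) :=
    mul_le_mul_of_nonneg_left h3 (abs_nonneg L)
  have h5 : |L| * (b 0 / (2 * (|L| + 1))) ≤ b 0 / 2 := by
    rw [mul_div_assoc', div_le_div_iff₀ (by positivity) (by positivity)]
    nlinarith [abs_nonneg L, hb0.le]
  have := abs_le.mp h2
  linarith [this.1]

lemma aux_int_mono (hb_nonneg : ∀ x, 0 ≤ x → 0 ≤ b x) (hb_anti : AntitoneOn b (Set.Ici 0))
    (hb0 : 0 < b 0) (hb_int : IntegrableOn b (Set.Ici 0))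
    {t s : ℝ} (ht0 : 0 ≤ t) (hts : t ≤ s) (hs1 : s < 1 / b 0)
    {T : Set ℝ} (hT : MeasurableSet T) (hTsub : T ⊆ Set.Ici 0)
    (hint : IntegrableOn (fun x => (b x * s / (1 - b x * s)) ^ 2) T) :
    IntegrableOn (fun x => (b x * t / (1 - b x * t)) ^ 2) T ∧
    ∫ x in T, (b x * t / (1 - b x * t)) ^ 2 ≤ ∫ x in T, (b x * s / (1 - b x * s)) ^ 2 := by
  have hmono : ∀ x ∈ T, (b x * t / (1 - b x * t)) ^ 2 ≤ (b x * s / (1 - b x * s)) ^ 2 :=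
    fun x hx => aux_f_mono hb_nonneg hb_anti hb0 ht0 hts hs1 (hTsub hx)
  have hti : IntegrableOn (fun x => (b x * t / (1 - b x * t)) ^ 2) T := by
    refine Integrable.mono hint (aux_f_meas hb_int t hTsub) ?_
    rw [ae_restrict_iff' hT]
    refine ae_of_all _ fun x hx => ?_
    rw [Real.norm_of_nonneg (sq_nonneg _), Real.norm_of_nonneg (sq_nonneg _)]
    exact hmono x hx
  exact ⟨hti, setIntegral_mono_on hti hint hT hmono⟩

lemma aux_int_strict (hb_nonneg : ∀ x, 0 ≤ x → 0 ≤ b x) (hb_anti : AntitoneOn b (Set.Ici 0))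
    (hb0 : 0 < b 0) (hb_int : IntegrableOn b (Set.Ici 0))
    {δ' : ℝ} (hδ'0 : 0 < δ') (hδ' : ∀ x ∈ Set.Icc (0:ℝ) δ', b 0 / 2 ≤ b x)
    {t s : ℝ} (ht0 : 0 ≤ t) (hts : t < s) (hs1 : s < 1 / b 0)
    {T : Set ℝ} (hT : MeasurableSet T) (hTsub : T ⊆ Set.Ici 0)
    {m : ℝ} (hm : 0 < m) (hmT : Set.Ioc 0 m ⊆ T)
    (hint : IntegrableOn (fun x => (b x * s / (1 - b x * s)) ^ 2) T) :
    ∫ x in T, (b x * t / (1 - b x * t)) ^ 2 < ∫ x in T, (b x * s / (1 - b x * s)) ^ 2 := by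
  obtain ⟨hti, -⟩ := aux_int_mono hb_nonneg hb_anti hb0 hb_int ht0 hts.le hs1 hT hTsub hint
  set c : ℝ := (b 0 / 2) ^ 2 * s * (s - t) with hc
  have hc0 : 0 < c := by
    have : 0 < s := ht0.trans_lt hts
    have : 0 < s - t := sub_pos.mpr hts
    positivity
  set m' : ℝ := min m δ' with hm'
  have hm'0 : 0 < m' := lt_min hm hδ'0
  have hSsub : Set.Ioc 0 m' ⊆ T := fun x hx => hmT ⟨hx.1, hx.2.trans (min_le_left _ _)⟩
  have hdiff : IntegrableOn
      (fun x => (b x * s / (1 - b x * s)) ^ 2 - (b x * t / (1 - b x * t)) ^ 2) T :=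
    hint.sub hti
  have hdiff_nonneg : 0 ≤ᵐ[volume.restrict T]
      fun x => (b x * s / (1 - b x * s)) ^ 2 - (b x * t / (1 - b x * t)) ^ 2 := by
    rw [EventuallyLE, ae_restrict_iff' hT]
    refine ae_of_all _ fun x hx => ?_
    have := aux_f_mono hb_nonneg hb_anti hb0 ht0 hts.le hs1 (hTsub hx)
    simpa using this
  have hstep1 : ∫ x in Set.Ioc 0 m',
        ((b x * s / (1 - b x * s)) ^ 2 - (b x * t / (1 - b x * t)) ^ 2)
      ≤ ∫ x in T, ((b x * s / (1 - b x * s)) ^ 2 - (b x * t / (1 - b x * t)) ^ 2) :=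
    setIntegral_mono_set hdiff hdiff_nonneg (HasSubset.Subset.eventuallyLE hSsub)
  have hstep2 : c * (volume (Set.Ioc (0:ℝ) m')).toReal ≤ ∫ x in Set.Ioc 0 m',
      ((b x * s / (1 - b x * s)) ^ 2 - (b x * t / (1 - b x * t)) ^ 2) := by
    refine setIntegral_ge_of_const_le_real measurableSet_Ioc ?_ (fun x hx => ?_)
      (hdiff.mono_set hSsub)
    · rw [Real.volume_Ioc]; exact ENNReal.ofReal_ne_top
    · have hx0 : (0:ℝ) ≤ x := hx.1.le
      have hxδ : b 0 / 2 ≤ b x := hδ' x ⟨hx0, hx.2.trans (min_le_right _ _)⟩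
      have := aux_f_gap hb_nonneg hb_anti hb0 ht0 hts hs1 hx0 hxδ
      rw [hc]; linarith
  have hvol : (volume (Set.Ioc (0:ℝ) m')).toReal = m' := by
    rw [Real.volume_Ioc, sub_zero, ENNReal.toReal_ofReal hm'0.le]
  have hpos : 0 < ∫ x in T,
      ((b x * s / (1 - b x * s)) ^ 2 - (b x * t / (1 - b x * t)) ^ 2) := by
    refine lt_of_lt_of_le (lt_of_lt_of_le ?_ hstep2) hstep1
    rw [hvol]; positivity
  rw [integral_sub hint hti] at hpos
  linarith
end Aux3


section Aux4
variable {b : ℝ → ℝ}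

lemma aux_xi_tendsto
    (hb_nonneg : ∀ x, 0 ≤ x → 0 ≤ b x)
    (hb_anti : AntitoneOn b (Set.Ici 0))
    (hb0 : 0 < b 0)
    (hb_lip : ∃ L δ : ℝ, 0 < δ ∧ ∀ x ∈ Set.Icc (0:ℝ) δ, |b x - b 0| ≤ L * x)
    (hb_int : IntegrableOn b (Set.Ici 0))
    (ξfun : ℝ → ℝ)
    (hξfun : ∀ γ : ℝ, 0 < γ → ξfun γ ∈ Set.Ioo 0 (1 / b 0) ∧
      ∫ x in Set.Ioc (0:ℝ) γ, (b x * ξfun γ / (1 - b x * ξfun γ)) ^ 2 = 1)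
    (ξinf : ℝ) (hξ_mem : ξinf ∈ Set.Ioo 0 (1 / b 0))
    (hξ_eq : ∫ x in Set.Ici (0:ℝ), (b x * ξinf / (1 - b x * ξinf)) ^ 2 = 1) :
    Tendsto ξfun atTop (nhds ξinf) := by
  obtain ⟨δ', hδ'0, hδ'⟩ := aux_delta hb0 hb_lip
  obtain ⟨hξ0, hξ1⟩ := hξ_mem
  have hIinf : IntegrableOn (fun x => (b x * ξinf / (1 - b x * ξinf)) ^ 2) (Set.Ici 0) :=
    aux_f_int hb_nonneg hb_anti hb0 hb_int hξ0.le hξ1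
  -- lower bound
  have hlow : ∀ γ : ℝ, 0 < γ → ξinf ≤ ξfun γ := by
    intro γ hγ
    by_contra hcon
    push_neg at hcon
    obtain ⟨hmem, heq⟩ := hξfun γ hγ
    have hIociS : Set.Ioc (0:ℝ) γ ⊆ Set.Ici 0 := fun x hx => hx.1.le
    have hint : IntegrableOn (fun x => (b x * ξinf / (1 - b x * ξinf)) ^ 2) (Set.Ioc 0 γ) :=
      hIinf.mono_set hIociS
    have h1 := aux_int_strict hb_nonneg hb_anti hb0 hb_int hδ'0 hδ' hmem.1.le hcon hξ1
      measurableSet_Ioc hIociS hγ subset_rfl hint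
    have h2 : ∫ x in Set.Ioc (0:ℝ) γ, (b x * ξinf / (1 - b x * ξinf)) ^ 2
        ≤ ∫ x in Set.Ici (0:ℝ), (b x * ξinf / (1 - b x * ξinf)) ^ 2 :=
      setIntegral_mono_set hIinf (ae_of_all _ fun x => sq_nonneg _)
        (HasSubset.Subset.eventuallyLE hIociS)
    rw [heq] at h1
    rw [hξ_eq] at h2
    linarith
  -- upper bound
  have hup : ∀ ξ' : ℝ, ξinf < ξ' → ξ' < 1 / b 0 → ∃ N : ℝ, ∀ γ, N ≤ γ → ξfun γ ≤ ξ' := by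
    intro ξ' h1 h2
    have hξ'0 : 0 ≤ ξ' := (hξ0.trans h1).le
    have hint' : IntegrableOn (fun x => (b x * ξ' / (1 - b x * ξ')) ^ 2) (Set.Ici 0) :=
      aux_f_int hb_nonneg hb_anti hb0 hb_int hξ'0 h2
    have hstrict : (1:ℝ) < ∫ x in Set.Ici (0:ℝ), (b x * ξ' / (1 - b x * ξ')) ^ 2 := by
      have := aux_int_strict hb_nonneg hb_anti hb0 hb_int hδ'0 hδ' hξ0.le h1 h2
        measurableSet_Ici subset_rfl one_pos (fun x hx => hx.1.le) hint'
      rwa [hξ_eq] at this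
    have hU : (⋃ n : ℕ, Set.Ioc (0:ℝ) (n:ℝ)) = Set.Ioi 0 := by
      ext x
      simp only [mem_iUnion, mem_Ioc, mem_Ioi]
      constructor
      · rintro ⟨n, h, _⟩; exact h
      · intro hx
        obtain ⟨n, hn⟩ := exists_nat_ge x
        exact ⟨n, hx, hn⟩
    have htend : Tendsto (fun n : ℕ => ∫ x in Set.Ioc (0:ℝ) (n:ℝ),
        (b x * ξ' / (1 - b x * ξ')) ^ 2) atTop
        (nhds (∫ x in Set.Ioi (0:ℝ), (b x * ξ' / (1 - b x * ξ')) ^ 2)) := by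
      have hm : Monotone fun n : ℕ => Set.Ioc (0:ℝ) (n:ℝ) :=
        fun n m hnm => Set.Ioc_subset_Ioc le_rfl (Nat.cast_le.mpr hnm)
      have := tendsto_setIntegral_of_monotone (fun n : ℕ => measurableSet_Ioc) hm
        (by rw [hU]; exact hint'.mono_set Set.Ioi_subset_Ici_self)
      rwa [hU] at this
    have hIoi : ∫ x in Set.Ioi (0:ℝ), (b x * ξ' / (1 - b x * ξ')) ^ 2
        = ∫ x in Set.Ici (0:ℝ), (b x * ξ' / (1 - b x * ξ')) ^ 2 :=
      (integral_Ici_eq_integral_Ioi).symm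
    have hev : ∀ᶠ n : ℕ in atTop, (1:ℝ) < ∫ x in Set.Ioc (0:ℝ) (n:ℝ),
        (b x * ξ' / (1 - b x * ξ')) ^ 2 :=
      htend.eventually_const_lt (by rw [hIoi]; exact hstrict)
    obtain ⟨Nn, hNn⟩ := eventually_atTop.mp hev
    refine ⟨max (Nn:ℝ) 1, fun γ hγ => ?_⟩
    have hγ1 : (1:ℝ) ≤ γ := le_trans (le_max_right _ _) hγ
    have hγ0 : 0 < γ := lt_of_lt_of_le one_pos hγ1
    by_contra hcon
    push_neg at hcon
    obtain ⟨hmemγ, heqγ⟩ := hξfun γ hγ0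
    have hIociS : Set.Ioc (0:ℝ) γ ⊆ Set.Ici 0 := fun x hx => hx.1.le
    have hintγ : IntegrableOn (fun x => (b x * ξfun γ / (1 - b x * ξfun γ)) ^ 2)
        (Set.Ioc 0 γ) := by
      by_contra hni
      rw [integral_undef hni] at heqγ
      norm_num at heqγ
    have hmono := (aux_int_mono hb_nonneg hb_anti hb0 hb_int hξ'0 hcon.le hmemγ.2
      measurableSet_Ioc hIociS hintγ).2
    have hle1 : ∫ x in Set.Ioc (0:ℝ) (Nn:ℝ), (b x * ξ' / (1 - b x * ξ')) ^ 2
        ≤ ∫ x in Set.Ioc (0:ℝ) γ, (b x * ξ' / (1 - b x * ξ')) ^ 2 := by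
      refine setIntegral_mono_set (hint'.mono_set hIociS)
        (ae_of_all _ fun x => sq_nonneg _) ?_
      exact HasSubset.Subset.eventuallyLE
        (Set.Ioc_subset_Ioc le_rfl (le_trans (le_max_left _ _) hγ))
    have := hNn Nn le_rfl
    rw [heqγ] at hmono
    linarith
  -- assemble
  rw [Metric.tendsto_atTop]
  intro ε hε
  set d : ℝ := min (ε / 2) ((1 / b 0 - ξinf) / 2) with hd
  have hd0 : 0 < d := lt_min (by linarith) (by linarith)
  obtain ⟨N, hN⟩ := hup (ξinf + d) (by linarith) (by
    have : d ≤ (1 / b 0 - ξinf) / 2 := min_le_right _ _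
    linarith)
  refine ⟨max N 1, fun γ hγ => ?_⟩
  have hγ1 : (1:ℝ) ≤ γ := le_trans (le_max_right _ _) hγ
  have h1 := hlow γ (lt_of_lt_of_le one_pos hγ1)
  have h2 := hN γ (le_trans (le_max_left _ _) hγ)
  have hdε : d ≤ ε / 2 := min_le_left _ _
  rw [Real.dist_eq, abs_of_nonneg (by linarith)]
  linarith
end Aux4


/-- `ψ(y) = y (1 + ∫_0^∞ b(x)/(y - b(x)) dx)`. -/
def psiFn (b : ℝ → ℝ) (y : ℝ) : ℝ :=
  y * (1 + ∫ x in Set.Ici (0:ℝ), b x / (y - b x))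

theorem psi_xi_tendsto
    -- the bulk function b : [0,∞) → [0,∞), non-increasing, b(0) > 0,
    -- Lipschitz continuous at 0, with ∫_0^∞ b(x) dx < ∞
    (b : ℝ → ℝ)
    (hb_nonneg : ∀ x, 0 ≤ x → 0 ≤ b x)
    (hb_anti : AntitoneOn b (Set.Ici 0))
    (hb0 : 0 < b 0)
    (hb_lip : ∃ L δ : ℝ, 0 < δ ∧ ∀ x ∈ Set.Icc (0:ℝ) δ, |b x - b 0| ≤ L * x)
    (hb_int : IntegrableOn b (Set.Ici 0))
    -- ξ(γ) : the unique solution in (0, 1/b(0)) of ∫_0^γ (b(x)ξ/(1-b(x)ξ))² dx = 1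
    (ξfun : ℝ → ℝ)
    (hξfun : ∀ γ : ℝ, 0 < γ → ξfun γ ∈ Set.Ioo 0 (1 / b 0) ∧
      ∫ x in Set.Ioc (0:ℝ) γ, (b x * ξfun γ / (1 - b x * ξfun γ)) ^ 2 = 1)
    -- the critical parameter ξ(∞)
    (ξinf : ℝ) (hξ_mem : ξinf ∈ Set.Ioo 0 (1 / b 0))
    (hξ_eq : ∫ x in Set.Ici (0:ℝ), (b x * ξinf / (1 - b x * ξinf)) ^ 2 = 1)
 :
    -- Conclusion: ψ(1/ξ(γ)) → ψ(1/ξ(∞)) as γ → ∞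
    Tendsto (fun γ : ℝ => psiFn b (1 / ξfun γ)) atTop (nhds (psiFn b (1 / ξinf))) := by
  obtain ⟨hξ0, hξ1⟩ := hξ_mem
  have hxt : Tendsto ξfun atTop (nhds ξinf) :=
    aux_xi_tendsto hb_nonneg hb_anti hb0 hb_lip hb_int ξfun hξfun ξinf ⟨hξ0, hξ1⟩ hξ_eq
  have hy : Tendsto (fun γ => 1 / ξfun γ) atTop (nhds (1 / ξinf)) :=
    tendsto_const_nhds.div hxt hξ0.ne'
  have hyb : b 0 < 1 / ξinf := by
    rw [lt_div_iff₀ hξ0]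
    have := (lt_div_iff₀ hb0).mp hξ1
    linarith [mul_comm ξinf (b 0)]
  set y0 : ℝ := (b 0 + 1 / ξinf) / 2 with hy0
  have hy0b : b 0 < y0 := by rw [hy0]; linarith
  have hy0y : y0 < 1 / ξinf := by rw [hy0]; linarith
  have hev : ∀ᶠ γ in atTop, y0 < 1 / ξfun γ := hy.eventually_const_lt hy0y
  have hI : Tendsto (fun γ => ∫ x in Set.Ici (0:ℝ), b x / (1 / ξfun γ - b x)) atTop
      (nhds (∫ x in Set.Ici (0:ℝ), b x / (1 / ξinf - b x))) := by
    have hbm : AEMeasurable b (volume.restrict (Set.Ici 0)) :=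
      hb_int.aestronglyMeasurable.aemeasurable
    refine tendsto_integral_filter_of_dominated_convergence
      (fun x => b x / (y0 - b 0)) ?_ ?_ ?_ ?_
    · refine Eventually.of_forall fun γ => ?_
      exact (hbm.div (aemeasurable_const.sub hbm)).aestronglyMeasurable
    · filter_upwards [hev] with γ hγ
      rw [ae_restrict_iff' measurableSet_Ici]
      refine ae_of_all _ fun x hx => ?_
      have hx0 : (0:ℝ) ≤ x := hx
      have ha : 0 ≤ b x := hb_nonneg x hx0
      have hab : b x ≤ b 0 := hb_anti self_mem_Ici hx0 hx0
      have hd : 0 < 1 / ξfun γ - b x := by linarith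
      rw [Real.norm_of_nonneg (div_nonneg ha hd.le)]
      exact div_le_div_of_nonneg_left ha (by linarith) (by linarith)
    · exact hb_int.div_const _
    · rw [ae_restrict_iff' measurableSet_Ici]
      refine ae_of_all _ fun x hx => ?_
      have hx0 : (0:ℝ) ≤ x := hx
      have hab : b x ≤ b 0 := hb_anti self_mem_Ici hx0 hx0
      have hd : 1 / ξinf - b x ≠ 0 := ne_of_gt (show (0:ℝ) < 1 / ξinf - b x by linarith)
      exact tendsto_const_nhds.div (hy.sub tendsto_const_nhds) hd
  simp only [psiFn]
  exact hy.mul (tendsto_const_nhds.add hI)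

end
end

section
/- Lipschitz-type stability of the criticality integral (equation (16) in the proof of Lemma 1): For every γ_0 > 0 there exists a constant c' > 0 (depending only on b and γ_0) such that for all γ, γ' ≥ γ_0, |∫_0^γ (b(x)ξ(γ')/(1 − b(x)ξ(γ')))^2 dx − 1| ≤ c' |γ − γ'|. -/
open MeasureTheory ProbabilityTheory Filter Set
open scoped RealInnerProductSpace ENNReal NNReal

noncomputable section

theorem criticality_integral_lipschitz
    -- the bulk function b : [0,∞) → [0,∞), non-increasing, b(0) > 0,
    -- Lipschitz continuous at 0, with ∫_0^∞ b(x) dx < ∞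
    (b : ℝ → ℝ)
    (hb_nonneg : ∀ x, 0 ≤ x → 0 ≤ b x)
    (hb_anti : AntitoneOn b (Set.Ici 0))
    (hb0 : 0 < b 0)
    (hb_lip : ∃ L δ : ℝ, 0 < δ ∧ ∀ x ∈ Set.Icc (0:ℝ) δ, |b x - b 0| ≤ L * x)
    (hb_int : IntegrableOn b (Set.Ici 0))
    -- ξ(γ) : the unique solution in (0, 1/b(0)) of ∫_0^γ (b(x)ξ/(1-b(x)ξ))² dx = 1
    (ξfun : ℝ → ℝ)
    (hξfun : ∀ γ : ℝ, 0 < γ → ξfun γ ∈ Set.Ioo 0 (1 / b 0) ∧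
      ∫ x in Set.Ioc (0:ℝ) γ, (b x * ξfun γ / (1 - b x * ξfun γ)) ^ 2 = 1)
 :
    -- Conclusion: for every γ₀ > 0 there is c' > 0 such that for all γ, γ' ≥ γ₀,
    -- |∫_0^γ (b(x)ξ(γ')/(1 - b(x)ξ(γ')))² dx - 1| ≤ c' |γ - γ'|
    ∀ γ₀ : ℝ, 0 < γ₀ → ∃ c' : ℝ, 0 < c' ∧
      ∀ γ γ' : ℝ, γ₀ ≤ γ → γ₀ ≤ γ' →
        |(∫ x in Set.Ioc (0:ℝ) γ, (b x * ξfun γ' / (1 - b x * ξfun γ')) ^ 2) - 1|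
          ≤ c' * |γ - γ'| := by
  intro γ₀ hγ₀
  obtain ⟨L, δ, hδ, hLip⟩ := hb_lip
  set L1 : ℝ := max L 1 with hL1def
  have hL1pos : (0:ℝ) < L1 := lt_of_lt_of_le one_pos (le_max_right _ _)
  set K : ℝ := L1 / b 0 with hKdef
  have hKpos : 0 < K := div_pos hL1pos hb0
  set x₀ : ℝ := min γ₀ δ with hx₀def
  have hx₀pos : 0 < x₀ := lt_min hγ₀ hδ
  set τ : ℝ := min (1/4) (min (1/(16*K)) (Real.sqrt x₀ / 4)) with hτdef
  have hτpos : 0 < τ := by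
    refine lt_min (by norm_num) (lt_min (by positivity) ?_)
    have := Real.sqrt_pos.mpr hx₀pos
    linarith
  have hτ4 : τ ≤ 1/4 := min_le_left _ _
  have hble : ∀ x : ℝ, 0 ≤ x → b x ≤ b 0 := fun x hx => hb_anti (Set.mem_Ici.mpr le_rfl) hx hx
  have hb'anti : Antitone (fun x : ℝ => b (max x 0)) := by
    intro x y hxy
    exact hb_anti (le_max_right x 0) (le_max_right y 0) (max_le_max hxy le_rfl)
  have hb'meas : Measurable (fun x : ℝ => b (max x 0)) := hb'anti.measurable
  -- Key uniform lower bound on 1 - b0 ξ(γ')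
  have key : ∀ γ' : ℝ, γ₀ ≤ γ' → τ ≤ 1 - b 0 * ξfun γ' := by
    intro γ' hγ'
    obtain ⟨⟨hξpos, hξlt⟩, hint⟩ := hξfun γ' (lt_of_lt_of_le hγ₀ hγ')
    set ξ : ℝ := ξfun γ' with hξdef
    have hb0ξ : b 0 * ξ < 1 := by
      have := (lt_div_iff₀ hb0).mp hξlt
      linarith [this]
    set t : ℝ := 1 - b 0 * ξ with htdef
    have htpos : 0 < t := by rw [htdef]; linarith
    by_cases h14 : (1:ℝ)/4 ≤ t
    · linarith
    push_neg at h14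
    set x₁ : ℝ := min x₀ (t/K) with hx₁def
    have hx₁pos : 0 < x₁ := lt_min hx₀pos (div_pos htpos hKpos)
    set f : ℝ → ℝ := fun x => (b x * ξ / (1 - b x * ξ))^2 with hfdef
    have hf_int : IntegrableOn f (Ioc (0:ℝ) γ') := by
      by_contra h
      rw [MeasureTheory.integral_undef h] at hint
      norm_num at hint
    have hlb : ∀ x ∈ Ioc (0:ℝ) x₁, 1/(16*t^2) ≤ f x := by
      intro x hx
      obtain ⟨hx0, hxle⟩ := hx
      have hxδ : x ≤ δ := le_trans hxle (le_trans (min_le_left _ _) (min_le_right _ _))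
      have hKx : K * x ≤ t := by
        have h := le_trans hxle (min_le_right _ _)
        rw [le_div_iff₀ hKpos] at h
        linarith
      have hlipx := hLip x ⟨hx0.le, hxδ⟩
      have hbx_lb : b 0 - L1 * x ≤ b x := by
        have h1 : |b x - b 0| ≤ L1 * x :=
          le_trans hlipx (mul_le_mul_of_nonneg_right (le_max_left _ _) hx0.le)
        have h2 := abs_le.mp h1
        linarith [h2.1]
      have hξle : ξ ≤ 1 / b 0 := hξlt.le
      have hu_lb : 1 - 2*t ≤ b x * ξ := by
        have h1 : (b 0 - L1 * x) * ξ ≤ b x * ξ := mul_le_mul_of_nonneg_right hbx_lb hξpos.le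
        have h2 : L1 * x * ξ ≤ K * x := by
          calc L1 * x * ξ ≤ L1 * x * (1 / b 0) :=
                mul_le_mul_of_nonneg_left hξle (by positivity)
            _ = K * x := by rw [hKdef]; field_simp
        nlinarith
      have hu_ub : b x * ξ ≤ 1 - t := by
        have := mul_le_mul_of_nonneg_right (hble x hx0.le) hξpos.le
        rw [htdef]; linarith
      have hu_half : 1/2 ≤ b x * ξ := by linarith
      have h1u_pos : 0 < 1 - b x * ξ := by linarith
      have h1u_le : 1 - b x * ξ ≤ 2*t := by linarith
      have hdiv : (1/2)/(2*t) ≤ b x * ξ / (1 - b x * ξ) :=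
        div_le_div₀ (by linarith) hu_half h1u_pos h1u_le
      have hsq : ((1/2)/(2*t))^2 ≤ f x := by
        refine pow_le_pow_left₀ (by positivity) hdiv 2
      have heq : ((1/2)/(2*t))^2 = 1/(16*t^2) := by
        field_simp
        ring
      rw [← heq]; exact hsq
    have hsub : Ioc (0:ℝ) x₁ ⊆ Ioc (0:ℝ) γ' :=
      Ioc_subset_Ioc le_rfl (le_trans (min_le_left _ _) (le_trans (min_le_left _ _) hγ'))
    have hvol : (volume (Ioc (0:ℝ) x₁)).toReal = x₁ := by
      rw [Real.volume_Ioc, ENNReal.toReal_ofReal (by linarith)]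
      ring
    have hint1 : 1/(16*t^2) * x₁ ≤ ∫ x in Ioc (0:ℝ) x₁, f x := by
      have := setIntegral_ge_of_const_le (μ := volume) measurableSet_Ioc
        (by rw [Real.volume_Ioc]; exact ENNReal.ofReal_ne_top) hlb (hf_int.mono_set hsub)
      rw [measureReal_def, hvol, smul_eq_mul] at this; linarith
    have hle1 : ∫ x in Ioc (0:ℝ) x₁, f x ≤ 1 := by
      rw [← hint]
      exact setIntegral_mono_set hf_int
        (Filter.Eventually.of_forall (fun x => sq_nonneg _))
        (HasSubset.Subset.eventuallyLE hsub)
    have hx₁le : x₁ ≤ 16*t^2 := by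
      have h := le_trans hint1 hle1
      have h16 : (0:ℝ) < 16*t^2 := by positivity
      have h' : x₁/(16*t^2) ≤ 1 := by
        calc x₁/(16*t^2) = 1/(16*t^2)*x₁ := by ring
          _ ≤ 1 := h
      exact (div_le_one h16).mp h'
    rcases le_total x₀ (t/K) with hc | hc
    · have hx0le : x₀ ≤ 16*t^2 := by
        rw [hx₁def, min_eq_left hc] at hx₁le; exact hx₁le
      have hsq : Real.sqrt x₀ ≤ 4*t := by
        rw [show (16:ℝ)*t^2 = (4*t)^2 by ring] at hx0le
        calc Real.sqrt x₀ ≤ Real.sqrt ((4*t)^2) := Real.sqrt_le_sqrt hx0le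
          _ = 4*t := Real.sqrt_sq (by linarith)
      calc τ ≤ Real.sqrt x₀ / 4 := le_trans (min_le_right _ _) (min_le_right _ _)
        _ ≤ t := by linarith
    · have htK : t/K ≤ 16*t^2 := by
        rw [hx₁def, min_eq_right hc] at hx₁le; exact hx₁le
      have h1 : 1/(16*K) ≤ t := by
        rw [div_le_iff₀ hKpos] at htK
        rw [div_le_iff₀ (by positivity : (0:ℝ) < 16*K)]
        nlinarith
      calc τ ≤ 1/(16*K) := le_trans (min_le_right _ _) (min_le_left _ _)
        _ ≤ t := h1
  -- the constant
  refine ⟨1/τ^2, by positivity, ?_⟩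
  intro γ γ' hγ hγ'
  have hγpos : 0 < γ := lt_of_lt_of_le hγ₀ hγ
  have hγ'pos : 0 < γ' := lt_of_lt_of_le hγ₀ hγ'
  obtain ⟨⟨hξpos, hξlt⟩, hint⟩ := hξfun γ' hγ'pos
  set ξ : ℝ := ξfun γ' with hξdef
  have hkey := key γ' hγ'
  set f : ℝ → ℝ := fun x => (b x * ξ / (1 - b x * ξ))^2 with hfdef
  have hub : ∀ x : ℝ, 0 < x → f x ≤ 1/τ^2 := by
    intro x hx
    have h1 : b x * ξ ≤ 1 - τ := by
      have := mul_le_mul_of_nonneg_right (hble x hx.le) hξpos.le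
      linarith
    have h0 : 0 ≤ b x * ξ := mul_nonneg (hb_nonneg x hx.le) hξpos.le
    have h2 : τ ≤ 1 - b x * ξ := by linarith
    have hdiv : b x * ξ / (1 - b x * ξ) ≤ 1/τ :=
      div_le_div₀ (by norm_num) (by linarith) hτpos h2
    calc f x ≤ (1/τ)^2 := pow_le_pow_left₀ (div_nonneg h0 (by linarith)) hdiv 2
      _ = 1/τ^2 := by rw [div_pow, one_pow]
  have hfnonneg : ∀ x, 0 ≤ f x := fun x => sq_nonneg _
  have hfmeas : ∀ s : Set ℝ, MeasurableSet s → s ⊆ Ioi 0 →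
      AEStronglyMeasurable f (volume.restrict s) := by
    intro s hs hssub
    have hg : Measurable fun x : ℝ => (b (max x 0) * ξ / (1 - b (max x 0) * ξ))^2 := by
      exact ((hb'meas.mul_const ξ).div (measurable_const.sub (hb'meas.mul_const ξ))).pow_const 2
    refine (hg.aestronglyMeasurable).congr ?_
    refine (ae_restrict_iff' hs).mpr (Filter.Eventually.of_forall ?_)
    intro x hx
    have : max x 0 = x := max_eq_left (le_of_lt (hssub hx))
    simp only [hfdef, this]
  have hfint : ∀ s : Set ℝ, MeasurableSet s → s ⊆ Ioi 0 → volume s ≠ ⊤ →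
      IntegrableOn f s := by
    intro s hs hssub hfin
    refine Integrable.mono' (g := fun _ => 1/τ^2) ?_ (hfmeas s hs hssub) ?_
    · exact integrableOn_const hfin
    · refine (ae_restrict_iff' hs).mpr (Filter.Eventually.of_forall ?_)
      intro x hx
      rw [Real.norm_eq_abs, abs_of_nonneg (hfnonneg x)]
      exact hub x (hssub hx)
  have hRbound : ∀ a c : ℝ, 0 < a → a ≤ c →
      ∫ x in Ioc a c, f x ≤ 1/τ^2 * (c - a) := by
    intro a c ha hac
    have hsub : Ioc a c ⊆ Ioi (0:ℝ) := fun x hx => lt_trans ha hx.1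
    have h := setIntegral_mono_on
      (hfint _ measurableSet_Ioc hsub (by rw [Real.volume_Ioc]; exact ENNReal.ofReal_ne_top))
      (integrableOn_const measure_Ioc_lt_top.ne)
      measurableSet_Ioc (fun x hx => hub x (hsub hx))
    rw [setIntegral_const, measureReal_def, Real.volume_Ioc, ENNReal.toReal_ofReal (by linarith),
      smul_eq_mul] at h
    linarith [h]
  have hsplit : ∀ a c : ℝ, 0 < a → a ≤ c →
      ∫ x in Ioc (0:ℝ) c, f x = (∫ x in Ioc (0:ℝ) a, f x) + ∫ x in Ioc a c, f x := by
    intro a c ha hac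
    rw [← Set.Ioc_union_Ioc_eq_Ioc ha.le hac]
    exact setIntegral_union (Set.Ioc_disjoint_Ioc_of_le le_rfl) measurableSet_Ioc
      (hfint _ measurableSet_Ioc (fun x hx => hx.1)
        (by rw [Real.volume_Ioc]; exact ENNReal.ofReal_ne_top))
      (hfint _ measurableSet_Ioc (fun x hx => lt_trans ha hx.1)
        (by rw [Real.volume_Ioc]; exact ENNReal.ofReal_ne_top))
  show |(∫ x in Ioc (0:ℝ) γ, f x) - 1| ≤ 1/τ^2 * |γ - γ'|
  rcases le_total γ γ' with hle | hle
  · have h1 : (∫ x in Ioc (0:ℝ) γ, f x) - 1 = -(∫ x in Ioc γ γ', f x) := by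
      rw [← hint, hsplit γ γ' hγpos hle]; ring
    have hRnn : 0 ≤ ∫ x in Ioc γ γ', f x :=
      setIntegral_nonneg measurableSet_Ioc (fun x _ => hfnonneg x)
    rw [h1, abs_neg, abs_of_nonneg hRnn, abs_sub_comm, abs_of_nonneg (by linarith)]
    exact hRbound γ γ' hγpos hle
  · have h1 : (∫ x in Ioc (0:ℝ) γ, f x) - 1 = ∫ x in Ioc γ' γ, f x := by
      rw [← hint, hsplit γ' γ hγ'pos hle]; ring
    have hRnn : 0 ≤ ∫ x in Ioc γ' γ, f x :=
      setIntegral_nonneg measurableSet_Ioc (fun x _ => hfnonneg x)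
    rw [h1, abs_of_nonneg hRnn, abs_of_nonneg (by linarith)]
    exact hRbound γ' γ hγ'pos hle

end
end
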